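/- In the ring of multivariate formal power series ℂ[[X₀, X₁, X₂, …]] over countably many variables (X_n)_{n∈ℕ}, let E_i = Σ_{k≥0} X_i^k/k! denote the exponential of the variable X_i. Then the family consisting of all the variables (X_n)_{n∈ℕ} together with E₀ and E₁ is algebraically independent over ℂ; equivalently, E₀ = e^{X₀} and E₁ = e^{X₁} are algebraically independent over the polynomial subalgebra ℂ[X₀, X₁, X₂, …]. -/

import Mathlib

/-- The exponential `e^{X_i}` of the variable `X_i` in `ℂ[[X₀, X₁, …]]`: its coefficient at
the monomial `X_i^k` is `1/k!` and its coefficient at any monomial involving another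
variable is `0`. -/
noncomputable def expVar (i : ℕ) : MvPowerSeries ℕ ℂ :=
  fun m => if m = Finsupp.single i (m i) then 1 / (Nat.factorial (m i) : ℂ) else 0

section AuxiliaryLemmas

open Polynomial Finset


open Polynomial Finset

private lemma natDegree_eq_zero_of_comp_eq (p : ℂ[X]) (h : p.comp (X + 1) = p) :
    p.natDegree = 0 := by
  have key : ∀ n : ℕ, p.eval (n : ℂ) = p.eval 0 := by
    intro n
    induction n with
    | zero => norm_num
    | succ n ihn =>
      have : p.eval ((n : ℂ) + 1) = (p.comp (X + 1)).eval (n : ℂ) := by simp [eval_comp]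
      rw [h] at this
      push_cast
      rw [this, ihn]
  have hroot : (p - C (p.eval 0)) = 0 := by
    apply Polynomial.eq_zero_of_infinite_isRoot
    apply Set.Infinite.mono (s := Set.range ((↑) : ℕ → ℂ))
    · rintro x ⟨n, rfl⟩
      simp [IsRoot, key n]
    · exact Set.infinite_range_of_injective Nat.cast_injective
  have : p = C (p.eval 0) := by linear_combination (norm := ring_nf) hroot
  rw [this]; exact natDegree_C _

private lemma eq_zero_of_smul_comp (b M : ℕ) (hb : b < M) (p : ℂ[X])
    (h : (b : ℂ) • p.comp (X + 1) - (M : ℂ) • p = 0) : p = 0 := by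
  by_contra hp
  have hdeg1 : (X + 1 : ℂ[X]).natDegree = 1 := by
    simpa using natDegree_X_add_C (1 : ℂ)
  have hdc : (p.comp (X + 1)).natDegree = p.natDegree := by
    rw [natDegree_comp, hdeg1, mul_one]
  have hlc : (p.comp (X + 1)).leadingCoeff = p.leadingCoeff := by
    rw [leadingCoeff_comp (by rw [hdeg1]; exact one_ne_zero)]
    rw [show (X + 1 : ℂ[X]) = X + C 1 by norm_num, leadingCoeff_X_add_C]
    simp
  have heq : (b : ℂ) • p.comp (X + 1) = (M : ℂ) • p := by
    linear_combination (norm := ring_nf) h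
  have hc := congrArg (fun q : ℂ[X] => q.coeff p.natDegree) heq
  simp only [coeff_smul, smul_eq_mul] at hc
  have h1 : (p.comp (X + 1)).coeff p.natDegree = p.leadingCoeff := by
    rw [← hdc]; rw [← leadingCoeff]; exact hlc
  rw [h1, ← leadingCoeff] at hc
  have hlc0 : p.leadingCoeff ≠ 0 := leadingCoeff_ne_zero.mpr hp
  have : (b : ℂ) = (M : ℂ) := mul_right_cancel₀ hlc0 hc
  exact absurd (Nat.cast_injective this) (Nat.ne_of_lt hb)

private lemma natDegree_comp_sub_lt (p : ℂ[X]) (hp : p.natDegree ≠ 0) :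
    (p.comp (X + 1) - p).natDegree < p.natDegree := by
  by_cases he : p.comp (X + 1) - p = 0
  · rw [he, natDegree_zero]; exact Nat.pos_of_ne_zero hp
  · have hp0 : p ≠ 0 := fun h => hp (by simp [h])
    have hdeg1 : (X + 1 : ℂ[X]).natDegree = 1 := by
      simpa using natDegree_X_add_C (1 : ℂ)
    have hdc : (p.comp (X + 1)).natDegree = p.natDegree := by
      rw [natDegree_comp, hdeg1, mul_one]
    have hc0 : p.comp (X + 1) ≠ 0 := by
      intro h
      rw [h] at hdc
      exact hp (by simpa using hdc.symm)
    have hlc : (p.comp (X + 1)).leadingCoeff = p.leadingCoeff := by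
      rw [leadingCoeff_comp (by rw [hdeg1]; exact one_ne_zero)]
      rw [show (X + 1 : ℂ[X]) = X + C 1 by norm_num, leadingCoeff_X_add_C]
      simp
    have hd : (p.comp (X + 1)).degree = p.degree := by
      rw [degree_eq_natDegree hc0, degree_eq_natDegree hp0, hdc]
    have := degree_sub_lt hd hc0 hlc
    rw [hd] at this
    exact natDegree_lt_natDegree he this

private lemma shifted_relation (N K : ℕ) (p : ℕ → ℂ[X])
    (h : ∀ l : ℕ, K ≤ l → ∑ b ∈ Icc 1 (N + 1), (b : ℂ) ^ l * (p b).eval (l : ℂ) = 0) :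
    ∀ l : ℕ, K ≤ l → ∑ b ∈ Icc 1 (N + 1), (b : ℂ) ^ l *
      (((b : ℂ) • (p b).comp (X + 1) - ((N + 1 : ℕ) : ℂ) • p b).eval (l : ℂ)) = 0 := by
  intro l hl
  have h1 := h (l + 1) (le_trans hl (Nat.le_succ l))
  have h2 := h l hl
  have step : ∀ b ∈ Icc 1 (N + 1),
      (b : ℂ) ^ l * (((b : ℂ) • (p b).comp (X + 1) - ((N + 1 : ℕ) : ℂ) • p b).eval (l : ℂ))
      = (b : ℂ) ^ (l + 1) * (p b).eval (((l + 1 : ℕ) : ℂ))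
        - ((N + 1 : ℕ) : ℂ) * ((b : ℂ) ^ l * (p b).eval (l : ℂ)) := by
    intro b _
    simp only [eval_sub, eval_smul, smul_eq_mul, eval_comp, eval_add, eval_X, eval_one]
    push_cast
    ring
  rw [Finset.sum_congr rfl step, Finset.sum_sub_distrib, ← Finset.mul_sum, h2, h1]
  ring

private lemma deg0_case (N K : ℕ) (p : ℕ → ℂ[X])
    (ihN : ∀ (K : ℕ) (p : ℕ → ℂ[X]),
      (∀ l : ℕ, K ≤ l → ∑ b ∈ Icc 1 N, (b : ℂ) ^ l * (p b).eval (l : ℂ) = 0) →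
      ∀ b ∈ Icc 1 N, p b = 0)
    (h : ∀ l : ℕ, K ≤ l → ∑ b ∈ Icc 1 (N + 1), (b : ℂ) ^ l * (p b).eval (l : ℂ) = 0)
    (h0 : (p (N + 1)).natDegree = 0) :
    ∀ b ∈ Icc 1 (N + 1), p b = 0 := by
  set p' : ℕ → ℂ[X] := fun b => (b : ℂ) • (p b).comp (X + 1) - ((N + 1 : ℕ) : ℂ) • p b with hp'
  have hrel := shifted_relation N K p h
  obtain ⟨c, hc⟩ : ∃ c, C c = p (N + 1) := ⟨_, (eq_C_of_natDegree_eq_zero h0).symm⟩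
  have htopzero : p' (N + 1) = 0 := by
    simp only [hp', ← hc, C_comp]
    rw [sub_self]
  -- relation over Icc 1 N for p'
  have hrelN : ∀ l : ℕ, K ≤ l → ∑ b ∈ Icc 1 N, (b : ℂ) ^ l * ((p' b).eval (l : ℂ)) = 0 := by
    intro l hl
    have h' := hrel l hl
    rw [Finset.sum_Icc_succ_top (Nat.le_add_left 1 N)] at h'
    have htop : eval (l : ℂ) (((N + 1 : ℕ) : ℂ) • (p (N + 1)).comp (X + 1)
        - ((N + 1 : ℕ) : ℂ) • p (N + 1)) = 0 := by
      rw [← hc]; simp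
    rw [htop, mul_zero, add_zero] at h'
    simpa only [hp'] using h'
  have hsmall : ∀ b ∈ Icc 1 N, p b = 0 := by
    intro b hb
    have := ihN K p' hrelN b hb
    exact eq_zero_of_smul_comp b (N + 1) (Nat.lt_succ_of_le (Finset.mem_Icc.mp hb).2) _ this
  have hczero : c = 0 := by
    have hK := h K le_rfl
    rw [Finset.sum_Icc_succ_top (Nat.le_add_left 1 N)] at hK
    have : ∑ b ∈ Icc 1 N, (b : ℂ) ^ K * (p b).eval (K : ℂ) = 0 := by
      apply Finset.sum_eq_zero
      intro b hb
      rw [hsmall b hb]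
      simp
    rw [this, zero_add, ← hc] at hK
    simp only [eval_C] at hK
    have hne : ((N + 1 : ℕ) : ℂ) ^ K ≠ 0 := pow_ne_zero _ (Nat.cast_ne_zero.mpr (Nat.succ_ne_zero N))
    exact (mul_eq_zero.mp hK).resolve_left hne
  intro b hb
  rcases Finset.mem_Icc.mp hb with ⟨hb1, hb2⟩
  rcases Nat.eq_or_lt_of_le hb2 with heq | hlt
  · rw [heq, ← hc, hczero]; simp
  · exact hsmall b (Finset.mem_Icc.mpr ⟨hb1, Nat.lt_succ_iff.mp hlt⟩)

private lemma seq_lemma (N : ℕ) : ∀ (K : ℕ) (p : ℕ → ℂ[X]),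
    (∀ l : ℕ, K ≤ l → ∑ b ∈ Icc 1 N, (b : ℂ) ^ l * (p b).eval (l : ℂ) = 0) →
    ∀ b ∈ Icc 1 N, p b = 0 := by
  induction N with
  | zero => intro K p _ b hb; simp at hb
  | succ N ihN =>
    suffices H : ∀ (d K : ℕ) (p : ℕ → ℂ[X]),
        (∀ l : ℕ, K ≤ l → ∑ b ∈ Icc 1 (N + 1), (b : ℂ) ^ l * (p b).eval (l : ℂ) = 0) →
        (p (N + 1)).natDegree ≤ d → ∀ b ∈ Icc 1 (N + 1), p b = 0 by
      intro K p hp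
      exact H (p (N + 1)).natDegree K p hp le_rfl
    intro d
    induction d with
    | zero =>
      intro K p hp hd
      exact deg0_case N K p ihN hp (Nat.le_zero.mp hd)
    | succ d ihd =>
      intro K p hp hd
      by_cases h0 : (p (N + 1)).natDegree = 0
      · exact deg0_case N K p ihN hp h0
      · exfalso
        set p' : ℕ → ℂ[X] := fun b => (b : ℂ) • (p b).comp (X + 1) - ((N + 1 : ℕ) : ℂ) • p b
          with hp'
        have hrel := shifted_relation N K p hp
        have hdrop : (p' (N + 1)).natDegree ≤ d := by
          have : p' (N + 1) = ((N + 1 : ℕ) : ℂ) • ((p (N + 1)).comp (X + 1) - p (N + 1)) := by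
            rw [hp', smul_sub]
          rw [this]
          refine le_trans (natDegree_smul_le _ _) ?_
          have := natDegree_comp_sub_lt (p (N + 1)) h0
          omega
        have hz := ihd K p' hrel hdrop (N + 1) (Finset.mem_Icc.mpr ⟨Nat.le_add_left 1 N, le_rfl⟩)
        have hsub : (p (N + 1)).comp (X + 1) - p (N + 1) = 0 := by
          have hne : ((N + 1 : ℕ) : ℂ) ≠ 0 := Nat.cast_ne_zero.mpr (Nat.succ_ne_zero N)
          have : p' (N + 1) = ((N + 1 : ℕ) : ℂ) • ((p (N + 1)).comp (X + 1) - p (N + 1)) := by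
            rw [hp', smul_sub]
          rw [this] at hz
          exact (smul_eq_zero.mp hz).resolve_left hne
        exact h0 (natDegree_eq_zero_of_comp_eq _ (by linear_combination (norm := ring_nf) hsub))


private lemma poch_monic (j : ℕ) : (∏ i ∈ range j, (X - C (i : ℂ))).Monic :=
  monic_prod_of_monic _ _ fun i _ => monic_X_sub_C _

private lemma poch_natDegree (j : ℕ) : (∏ i ∈ range j, (X - C (i : ℂ))).natDegree = j := by
  rw [natDegree_prod _ _ fun i _ => X_sub_C_ne_zero _,
    Finset.sum_congr rfl fun i _ => natDegree_X_sub_C _]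
  simp

private lemma poch_eval (j l : ℕ) (h : j ≤ l) :
    (∏ i ∈ range j, ((l : ℂ) - (i : ℂ))) * ((l - j).factorial : ℂ) = (l.factorial : ℂ) := by
  have h1 : ∀ i ∈ range j, (l : ℂ) - (i : ℂ) = ((l - i : ℕ) : ℂ) := by
    intro i hi
    rw [Nat.cast_sub (le_trans (Nat.le_of_lt_succ (Nat.lt_succ_of_lt (mem_range.mp hi))) h)]
  rw [Finset.prod_congr rfl h1, ← Nat.cast_prod, ← Nat.cast_mul,
    ← Nat.descFactorial_eq_prod_range, mul_comm, Nat.factorial_mul_descFactorial h]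

private lemma poch_indep (n : ℕ) : ∀ γ : ℕ → ℂ,
    (∑ j ∈ range n, γ j • ∏ i ∈ range j, (X - C (i : ℂ))) = 0 → ∀ j < n, γ j = 0 := by
  induction n with
  | zero => intro γ _ j hj; omega
  | succ n ih =>
    intro γ hγ j hj
    have htop : γ n = 0 := by
      have hc := congrArg (fun q : ℂ[X] => q.coeff n) hγ
      simp only [finset_sum_coeff, coeff_smul, smul_eq_mul, coeff_zero] at hc
      rw [Finset.sum_range_succ] at hc
      have hmain : (∏ i ∈ range n, (X - C (i : ℂ))).coeff n = 1 := by
        have := (poch_monic n).coeff_natDegree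
        rwa [poch_natDegree n] at this
      have hrest : ∀ i ∈ range n, γ i * (∏ i' ∈ range i, (X - C (i' : ℂ))).coeff n = 0 := by
        intro i hi
        rw [coeff_eq_zero_of_natDegree_lt (by rw [poch_natDegree]; exact mem_range.mp hi),
          mul_zero]
      rw [Finset.sum_eq_zero hrest, zero_add, hmain, mul_one] at hc
      exact hc
    rcases Nat.lt_succ_iff_lt_or_eq.mp hj with hlt | heq
    · apply ih γ _ j hlt
      rw [Finset.sum_range_succ, htop, zero_smul, add_zero] at hγ
      exact hγ
    · rw [heq]; exact htop

private lemma coeff_lemma (D : ℕ) (c : ℕ → ℕ → ℂ)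
    (h : ∀ l : ℕ, ∑ b ∈ range (D + 1), ∑ j ∈ range (D + 1),
        (if j ≤ l then c b j * (b : ℂ) ^ (l - j) / ((l - j).factorial : ℂ) else 0) = 0) :
    ∀ b j : ℕ, b ≤ D → j ≤ D → c b j = 0 := by
  set p : ℕ → ℂ[X] :=
    fun b => ∑ j ∈ range (D + 1), (c b j / (b : ℂ) ^ j) • ∏ i ∈ range j, (X - C (i : ℂ)) with hp
  have key : ∀ l : ℕ, D + 1 ≤ l →
      ∑ b ∈ Icc 1 D, (b : ℂ) ^ l * (p b).eval (l : ℂ)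
        = (l.factorial : ℂ) * ∑ b ∈ range (D + 1), ∑ j ∈ range (D + 1),
            (if j ≤ l then c b j * (b : ℂ) ^ (l - j) / ((l - j).factorial : ℂ) else 0) := by
    intro l hl
    rw [Finset.mul_sum]
    rw [← Finset.sum_subset
      (show Icc 1 D ⊆ range (D + 1) by
        intro b hb; rw [mem_range]; rw [mem_Icc] at hb; omega)
      (by
        intro b hb hnb
        have hb0 : b = 0 := by
          rw [mem_range] at hb; rw [mem_Icc] at hnb; omega
        subst hb0
        rw [mul_eq_zero]
        right
        apply Finset.sum_eq_zero
        intro j hj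
        rw [mem_range] at hj
        split
        · rw [show ((0 : ℕ) : ℂ) ^ (l - j) = 0 by
            rw [Nat.cast_zero, zero_pow]; omega]
          simp
        · rfl)]
    apply Finset.sum_congr rfl
    intro b hb
    rw [mem_Icc] at hb
    have hb0 : (b : ℂ) ≠ 0 := Nat.cast_ne_zero.mpr (by omega)
    simp only [hp, eval_finset_sum, eval_smul, smul_eq_mul, eval_prod, eval_sub, eval_X, eval_C, eval_natCast]
    rw [Finset.mul_sum, Finset.mul_sum]
    apply Finset.sum_congr rfl
    intro j hj
    rw [mem_range] at hj
    have hjl : j ≤ l := by omega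
    rw [if_pos hjl]
    have hfacne : (((l - j).factorial : ℕ) : ℂ) ≠ 0 := Nat.cast_ne_zero.mpr (Nat.factorial_ne_zero _)
    have hP : (∏ i ∈ range j, ((l : ℂ) - (i : ℂ))) = (l.factorial : ℂ) / ((l - j).factorial : ℂ) := by
      rw [eq_div_iff hfacne]; exact poch_eval j l hjl
    rw [hP, pow_sub₀ _ hb0 (by omega : j ≤ l)]
    field_simp
  have hrel : ∀ l : ℕ, D + 1 ≤ l → ∑ b ∈ Icc 1 D, (b : ℂ) ^ l * (p b).eval (l : ℂ) = 0 := by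
    intro l hl
    rw [key l hl, h l, mul_zero]
  have hpz := seq_lemma D (D + 1) p hrel
  have hc1 : ∀ b ∈ Icc 1 D, ∀ j ≤ D, c b j = 0 := by
    intro b hb j hj
    have hz := hpz b hb
    have := poch_indep (D + 1) (fun j => c b j / (b : ℂ) ^ j) (by simpa only [hp] using hz) j
      (by omega)
    rcases div_eq_zero_iff.mp this with h' | h'
    · exact h'
    · rw [mem_Icc] at hb
      exact absurd h' (pow_ne_zero _ (Nat.cast_ne_zero.mpr (by omega)))
  intro b j hb hj
  rcases Nat.eq_zero_or_pos b with rfl | hbpos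
  · have h0 := h j
    rw [Finset.sum_eq_single 0 (fun b' hb' hb'0 => by
        apply Finset.sum_eq_zero
        intro j' hj'
        rw [mem_range] at hb' hj'
        rw [hc1 b' (mem_Icc.mpr (by omega)) j' (by omega)]
        split <;> simp)
      (by intro habs; exact absurd (mem_range.mpr (by omega : (0:ℕ) < D + 1)) habs)] at h0
    rw [Finset.sum_eq_single j (fun j' hj' hj'j => by
        rw [mem_range] at hj'
        rcases Nat.lt_or_ge j' j with hlt | hge
        · rw [if_pos (by omega)]
          rw [show ((0 : ℕ) : ℂ) ^ (j - j') = 0 by rw [Nat.cast_zero, zero_pow]; omega]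
          simp
        · rw [if_neg (by omega)])
      (by intro habs; exact absurd (mem_range.mpr (by omega)) habs)] at h0
    rw [if_pos le_rfl] at h0
    simpa using h0
  · exact hc1 b (mem_Icc.mpr ⟨hbpos, hb⟩) j hj

private noncomputable def expMul (i a : ℕ) : MvPowerSeries ℕ ℂ :=
  fun m => if m = Finsupp.single i (m i) then (a : ℂ) ^ (m i) / (Nat.factorial (m i) : ℂ) else 0

private lemma coeff_expMul (i a : ℕ) (m : ℕ →₀ ℕ) :
    MvPowerSeries.coeff m (expMul i a)
      = if m = Finsupp.single i (m i) then (a : ℂ) ^ (m i) / (Nat.factorial (m i) : ℂ) else 0 :=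
  rfl

private lemma coeff_expVar (i : ℕ) (m : ℕ →₀ ℕ) :
    MvPowerSeries.coeff m (expVar i)
      = if m = Finsupp.single i (m i) then 1 / (Nat.factorial (m i) : ℂ) else 0 :=
  rfl

private lemma expVar_pow (i a : ℕ) : expVar i ^ a = expMul i a := by
  induction a with
  | zero =>
    rw [pow_zero]
    apply MvPowerSeries.ext
    intro m
    rw [coeff_expMul, MvPowerSeries.coeff_one]
    by_cases hm : m = 0
    · subst hm
      rw [if_pos rfl, if_pos (by simp)]
      simp
    · rw [if_neg hm]
      by_cases hsingle : m = Finsupp.single i (m i)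
      · rw [if_pos hsingle]
        have hmi : m i ≠ 0 := by
          intro h0
          rw [h0, Finsupp.single_zero] at hsingle
          exact hm hsingle
        rw [Nat.cast_zero, zero_pow hmi, zero_div]
      · rw [if_neg hsingle]
  | succ a ih =>
    rw [pow_succ, ih]
    apply MvPowerSeries.ext
    intro m
    rw [MvPowerSeries.coeff_mul, coeff_expMul]
    by_cases hm : m = Finsupp.single i (m i)
    · rw [if_pos hm]
      -- rewrite the antidiagonal using hm
      conv_lhs => rw [hm]
      rw [Finsupp.antidiagonal_single, Finset.sum_map]
      have hterm : ∀ p ∈ Finset.HasAntidiagonal.antidiagonal (m i),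
          (MvPowerSeries.coeff (Finsupp.single i p.1) (expMul i a)) *
            (MvPowerSeries.coeff (Finsupp.single i p.2) (expVar i))
          = (a : ℂ) ^ p.1 / (p.1.factorial : ℂ) * (1 / (p.2.factorial : ℂ)) := by
        intro p _
        rw [coeff_expMul, coeff_expVar]
        simp [Finsupp.single_eq_same]
      rw [Finset.sum_congr rfl fun p hp => by
        simpa using hterm p hp]
      rw [Finset.Nat.sum_antidiagonal_eq_sum_range_succ
        (fun x y => (a : ℂ) ^ x / (x.factorial : ℂ) * ((y.factorial : ℂ))⁻¹)]
      -- now a binomial identity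
      have : ((a : ℂ) + 1) ^ (m i) = ∑ x ∈ Finset.range (m i + 1),
          (a : ℂ) ^ x * ((m i).choose x : ℂ) := by
        simpa using add_pow (a : ℂ) 1 (m i)
      push_cast
      rw [this, Finset.sum_div]
      apply Finset.sum_congr rfl
      intro x hx
      rw [Finset.mem_range] at hx
      rw [Nat.cast_choose ℂ (by omega : x ≤ m i)]
      have h1 : ((x.factorial : ℂ)) ≠ 0 := Nat.cast_ne_zero.mpr (Nat.factorial_ne_zero _)
      have h2 : (((m i - x).factorial : ℂ)) ≠ 0 := Nat.cast_ne_zero.mpr (Nat.factorial_ne_zero _)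
      have h3 : (((m i).factorial : ℂ)) ≠ 0 := Nat.cast_ne_zero.mpr (Nat.factorial_ne_zero _)
      field_simp
    · rw [if_neg hm]
      apply Finset.sum_eq_zero
      intro p hp
      rw [Finset.HasAntidiagonal.mem_antidiagonal] at hp
      rw [coeff_expMul, coeff_expVar]
      by_cases h1 : p.1 = Finsupp.single i (p.1 i)
      · by_cases h2 : p.2 = Finsupp.single i (p.2 i)
        · exfalso
          apply hm
          have : m = Finsupp.single i (p.1 i + p.2 i) := by
            rw [← hp, Finsupp.single_add]
            conv_lhs => rw [h1, h2]
          rw [this]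
          simp
        · rw [if_neg h2, mul_zero]
      · rw [if_neg h1, zero_mul]

private lemma coeff_G (a b : ℕ) (n : ℕ →₀ ℕ) :
    MvPowerSeries.coeff n (expMul 0 a * expMul 1 b)
      = if n = Finsupp.single 0 (n 0) + Finsupp.single 1 (n 1)
        then (a : ℂ) ^ (n 0) * (b : ℂ) ^ (n 1) / (((n 0).factorial : ℂ) * ((n 1).factorial : ℂ))
        else 0 := by
  rw [MvPowerSeries.coeff_mul]
  by_cases hn : n = Finsupp.single 0 (n 0) + Finsupp.single 1 (n 1)
  · rw [if_pos hn]
    rw [Finset.sum_eq_single (Finsupp.single 0 (n 0), Finsupp.single 1 (n 1))]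
    · rw [coeff_expMul, coeff_expMul]
      rw [if_pos (by simp), if_pos (by rw [Finsupp.single_eq_same])]
      rw [Finsupp.single_eq_same, Finsupp.single_eq_same]
      rw [div_mul_div_comm]
    · rintro ⟨u, v⟩ hp hne
      rw [Finset.HasAntidiagonal.mem_antidiagonal] at hp
      rw [coeff_expMul, coeff_expMul]
      by_cases h1 : u = Finsupp.single 0 (u 0)
      · by_cases h2 : v = Finsupp.single 1 (v 1)
        · exfalso
          apply hne
          have hv0 : v 0 = 0 := by rw [h2]; exact Finsupp.single_eq_of_ne' one_ne_zero
          have hu1 : u 1 = 0 := by rw [h1]; exact Finsupp.single_eq_of_ne' zero_ne_one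
          have hn0 : n 0 = u 0 := by rw [← hp, Finsupp.add_apply, hv0, add_zero]
          have hn1 : n 1 = v 1 := by rw [← hp, Finsupp.add_apply, hu1, zero_add]
          rw [Prod.mk.injEq]
          constructor
          · rw [hn0, ← h1]
          · rw [hn1, ← h2]
        · rw [if_neg h2, mul_zero]
      · rw [if_neg h1, zero_mul]
    · intro habs
      exact absurd (Finset.HasAntidiagonal.mem_antidiagonal.mpr hn.symm) habs
  · rw [if_neg hn]
    apply Finset.sum_eq_zero
    rintro ⟨u, v⟩ hp
    rw [Finset.HasAntidiagonal.mem_antidiagonal] at hp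
    rw [coeff_expMul, coeff_expMul]
    by_cases h1 : u = Finsupp.single 0 (u 0)
    · by_cases h2 : v = Finsupp.single 1 (v 1)
      · exfalso
        apply hn
        have hv0 : v 0 = 0 := by rw [h2]; exact Finsupp.single_eq_of_ne' one_ne_zero
        have hu1 : u 1 = 0 := by rw [h1]; exact Finsupp.single_eq_of_ne' zero_ne_one
        have hn0 : n 0 = u 0 := by rw [← hp, Finsupp.add_apply, hv0, add_zero]
        have hn1 : n 1 = v 1 := by rw [← hp, Finsupp.add_apply, hu1, zero_add]
        rw [hn0, hn1, ← h1, ← h2]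
        exact hp.symm
      · rw [if_neg h2, mul_zero]
    · rw [if_neg h1, zero_mul]

private lemma prod_X_pow (μ : ℕ →₀ ℕ) :
    (μ.prod fun n e => (MvPowerSeries.X n : MvPowerSeries ℕ ℂ) ^ e)
      = MvPowerSeries.monomial μ 1 := by
  induction μ using Finsupp.induction with
  | zero => rw [Finsupp.prod_zero_index, MvPowerSeries.monomial_zero_one]
  | single_add n e f hn he ih =>
    rw [Finsupp.prod_add_index (fun a _ => pow_zero _) (fun a _ b1 b2 => pow_add _ b1 b2)]
    rw [Finsupp.prod_single_index
      (h := fun n e => (MvPowerSeries.X n : MvPowerSeries ℕ ℂ) ^ e) (pow_zero _), ih,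
      MvPowerSeries.X_pow_eq,
      MvPowerSeries.monomial_mul_monomial, one_mul]

section Part4

open Finset MvPowerSeries

private noncomputable def Phi (μ : ℕ →₀ ℕ) (a b : ℕ) : (ℕ ⊕ Fin 2) →₀ ℕ :=
  Finsupp.mapDomain Sum.inl μ + Finsupp.single (Sum.inr 0) a + Finsupp.single (Sum.inr 1) b

private lemma Phi_inl (μ : ℕ →₀ ℕ) (a b n : ℕ) : Phi μ a b (Sum.inl n) = μ n := by
  simp [Phi, Finsupp.mapDomain_apply Sum.inl_injective, Finsupp.single_apply]

private lemma Phi_inr0 (μ : ℕ →₀ ℕ) (a b : ℕ) : Phi μ a b (Sum.inr 0) = a := by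
  have h1 : Sum.inr (0 : Fin 2) ∉ Set.range (Sum.inl : ℕ → ℕ ⊕ Fin 2) := by
    rintro ⟨n, hn⟩; exact Sum.inl_ne_inr hn
  simp [Phi, Finsupp.mapDomain_notin_range _ _ h1, Finsupp.single_apply]

private lemma Phi_inr1 (μ : ℕ →₀ ℕ) (a b : ℕ) : Phi μ a b (Sum.inr 1) = b := by
  have h1 : Sum.inr (1 : Fin 2) ∉ Set.range (Sum.inl : ℕ → ℕ ⊕ Fin 2) := by
    rintro ⟨n, hn⟩; exact Sum.inl_ne_inr hn
  simp [Phi, Finsupp.mapDomain_notin_range _ _ h1, Finsupp.single_apply]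

private lemma d_decomp (d : (ℕ ⊕ Fin 2) →₀ ℕ) :
    d = Phi ((Finsupp.sumFinsuppEquivProdFinsupp d).1) (d (Sum.inr 0)) (d (Sum.inr 1)) := by
  ext s
  cases s with
  | inl n =>
    rw [Phi_inl, Finsupp.fst_sumFinsuppEquivProdFinsupp]
  | inr j =>
    have : j = 0 ∨ j = 1 := by omega
    rcases this with rfl | rfl
    · rw [Phi_inr0]
    · rw [Phi_inr1]

private lemma mu_decomp (μ : ℕ →₀ ℕ) :
    μ = ((μ.erase 0).erase 1) + Finsupp.single 0 (μ 0) + Finsupp.single 1 (μ 1) := by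
  ext j
  rw [Finsupp.add_apply, Finsupp.add_apply, Finsupp.single_apply, Finsupp.single_apply]
  by_cases h0 : j = 0
  · subst h0
    rw [Finsupp.erase_ne (by norm_num), Finsupp.erase_same]
    simp
  · by_cases h1 : j = 1
    · subst h1
      rw [Finsupp.erase_same]
      simp
    · rw [Finsupp.erase_ne h1, Finsupp.erase_ne h0]
      rw [if_neg (fun h => h0 h.symm), if_neg (fun h => h1 h.symm)]
      simp

private lemma erase_erase_0 (μ : ℕ →₀ ℕ) : ((μ.erase 0).erase 1) 0 = 0 := by
  rw [Finsupp.erase_ne (by norm_num), Finsupp.erase_same]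

private lemma erase_erase_1 (μ : ℕ →₀ ℕ) : ((μ.erase 0).erase 1) 1 = 0 :=
  Finsupp.erase_same

-- value lemmas for m = α + single 0 k + single 1 l
private lemma mval0 (α : ℕ →₀ ℕ) (hα0 : α 0 = 0) (k l : ℕ) :
    ((α + Finsupp.single 0 k + Finsupp.single 1 l : ℕ →₀ ℕ)) 0 = k := by
  rw [Finsupp.add_apply, Finsupp.add_apply, hα0, Finsupp.single_eq_same,
    Finsupp.single_eq_of_ne (by norm_num)]
  omega

private lemma mval1 (α : ℕ →₀ ℕ) (hα1 : α 1 = 0) (k l : ℕ) :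
    ((α + Finsupp.single 0 k + Finsupp.single 1 l : ℕ →₀ ℕ)) 1 = l := by
  rw [Finsupp.add_apply, Finsupp.add_apply, hα1, Finsupp.single_eq_same,
    Finsupp.single_eq_of_ne (by norm_num)]
  omega

private lemma mvalj (α : ℕ →₀ ℕ) (k l j : ℕ) (h0 : j ≠ 0) (h1 : j ≠ 1) :
    ((α + Finsupp.single 0 k + Finsupp.single 1 l : ℕ →₀ ℕ)) j = α j := by
  rw [Finsupp.add_apply, Finsupp.add_apply,
    Finsupp.single_eq_of_ne' (fun h => h0 h.symm), Finsupp.single_eq_of_ne' (fun h => h1 h.symm)]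
  simp

private noncomputable abbrev FF : ℕ ⊕ Fin 2 → MvPowerSeries ℕ ℂ :=
  Sum.elim (fun n : ℕ => (MvPowerSeries.X n : MvPowerSeries ℕ ℂ))
    (fun j : Fin 2 => expVar (j : ℕ))

private lemma prod_Phi (μ : ℕ →₀ ℕ) (a b : ℕ) :
    ((Phi μ a b).prod fun s e => FF s ^ e)
      = MvPowerSeries.monomial μ 1 * (expMul 0 a * expMul 1 b) := by
  rw [Phi, Finsupp.prod_add_index (fun s _ => pow_zero (FF s)) (fun s _ e1 e2 => pow_add _ e1 e2),
    Finsupp.prod_add_index (fun s _ => pow_zero (FF s)) (fun s _ e1 e2 => pow_add _ e1 e2),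
    Finsupp.prod_single_index (h := fun s e => FF s ^ e) (pow_zero _),
    Finsupp.prod_single_index (h := fun s e => FF s ^ e) (pow_zero _),
    Finsupp.prod_mapDomain_index_inj Sum.inl_injective]
  have h0 : FF (Sum.inr 0) = expVar 0 := by simp [FF]
  have h1 : FF (Sum.inr 1) = expVar 1 := by simp [FF]
  rw [h0, h1, expVar_pow, expVar_pow]
  have h2 : (μ.prod fun n e => FF (Sum.inl n) ^ e)
      = μ.prod fun n e => (MvPowerSeries.X n : MvPowerSeries ℕ ℂ) ^ e := rfl
  rw [h2, prod_X_pow, mul_assoc]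

private lemma coeff_aeval_monomial (α α' : ℕ →₀ ℕ) (hα0 : α 0 = 0) (hα1 : α 1 = 0)
    (hα'0 : α' 0 = 0) (hα'1 : α' 1 = 0) (k l k' l' a b : ℕ) (r : ℂ) :
    MvPowerSeries.coeff (α + Finsupp.single 0 k + Finsupp.single 1 l)
      (MvPolynomial.aeval FF (MvPolynomial.monomial
        (Phi (α' + Finsupp.single 0 k' + Finsupp.single 1 l') a b) r))
      = if α' = α ∧ k' ≤ k ∧ l' ≤ l
        then r * ((a : ℂ) ^ (k - k') * (b : ℂ) ^ (l - l')
          / (((k - k').factorial : ℂ) * ((l - l').factorial : ℂ)))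
        else 0 := by
  set μ := α' + Finsupp.single 0 k' + Finsupp.single 1 l' with hμ
  set m := α + Finsupp.single 0 k + Finsupp.single 1 l with hm
  rw [MvPolynomial.aeval_monomial, prod_Phi]
  have halg : algebraMap ℂ (MvPowerSeries ℕ ℂ) r = MvPowerSeries.C r := rfl
  rw [halg, ← MvPowerSeries.monomial_zero_eq_C_apply, ← mul_assoc,
    MvPowerSeries.monomial_mul_monomial, zero_add, mul_one,
    MvPowerSeries.coeff_monomial_mul]
  have hμ0 : μ 0 = k' := mval0 α' hα'0 k' l'
  have hμ1 : μ 1 = l' := mval1 α' hα'1 k' l'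
  have hm0 : m 0 = k := mval0 α hα0 k l
  have hm1 : m 1 = l := mval1 α hα1 k l
  by_cases hcond : α' = α ∧ k' ≤ k ∧ l' ≤ l
  · obtain ⟨hαα, hk, hl⟩ := hcond
    have hle : μ ≤ m := by
      rw [Finsupp.le_def]
      intro j
      by_cases h0 : j = 0
      · subst h0; rw [hμ0, hm0]; exact hk
      · by_cases h1 : j = 1
        · subst h1; rw [hμ1, hm1]; exact hl
        · rw [hμ, hm, mvalj α' k' l' j h0 h1, mvalj α k l j h0 h1, hαα]
    rw [if_pos hle, if_pos ⟨hαα, hk, hl⟩]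
    have hsub : m - μ = Finsupp.single 0 (k - k') + Finsupp.single 1 (l - l') := by
      ext j
      rw [Finsupp.tsub_apply]
      by_cases h0 : j = 0
      · subst h0
        rw [hμ0, hm0]
        simp [Finsupp.single_apply]
      · by_cases h1 : j = 1
        · subst h1
          rw [hμ1, hm1]
          simp [Finsupp.single_apply]
        · rw [hμ, hm, mvalj α' k' l' j h0 h1, mvalj α k l j h0 h1, hαα]
          simp [Finsupp.single_apply, Ne.symm h0, Ne.symm h1]
    rw [hsub, coeff_G]
    have hv0 : ((Finsupp.single 0 (k - k') + Finsupp.single 1 (l - l') : ℕ →₀ ℕ)) 0 = k - k' := by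
      simp [Finsupp.single_apply]
    have hv1 : ((Finsupp.single 0 (k - k') + Finsupp.single 1 (l - l') : ℕ →₀ ℕ)) 1 = l - l' := by
      simp [Finsupp.single_apply]
    rw [if_pos (by rw [hv0, hv1]), hv0, hv1]
  · rw [if_neg hcond]
    by_cases hle : μ ≤ m
    · rw [if_pos hle]
      have hk : k' ≤ k := by have := Finsupp.le_def.mp hle 0; rwa [hμ0, hm0] at this
      have hl : l' ≤ l := by have := Finsupp.le_def.mp hle 1; rwa [hμ1, hm1] at this
      have hαne : α' ≠ α := fun h => hcond ⟨h, hk, hl⟩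
      rw [coeff_G, if_neg, mul_zero]
      intro habs
      apply hαne
      ext j
      by_cases h0 : j = 0
      · subst h0; rw [hα'0, hα0]
      · by_cases h1 : j = 1
        · subst h1; rw [hα'1, hα1]
        · have hj := DFunLike.congr_fun habs j
          rw [Finsupp.tsub_apply] at hj
          rw [hμ, hm, mvalj α' k' l' j h0 h1, mvalj α k l j h0 h1] at hj
          have e0 : ¬ ((0 : ℕ) = j) := fun h => h0 h.symm
          have e1 : ¬ ((1 : ℕ) = j) := fun h => h1 h.symm
          simp only [Finsupp.add_apply, Finsupp.single_apply, if_neg e0, if_neg e1,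
            add_zero] at hj
          have hlej := Finsupp.le_def.mp hle j
          rw [hμ, hm, mvalj α' k' l' j h0 h1, mvalj α k l j h0 h1] at hlej
          omega
    · rw [if_neg hle]

end Part4

section Part5

open Finset

private lemma fst_apply (x : (ℕ ⊕ Fin 2) →₀ ℕ) (n : ℕ) :
    (Finsupp.sumFinsuppEquivProdFinsupp x).1 n = x (Sum.inl n) :=
  Finsupp.fst_sumFinsuppEquivProdFinsupp x n

private lemma T_formula (α : ℕ →₀ ℕ) (hα0 : α 0 = 0) (hα1 : α 1 = 0) (k l : ℕ)
    (x : (ℕ ⊕ Fin 2) →₀ ℕ) (r : ℂ) :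
    MvPowerSeries.coeff (α + Finsupp.single 0 k + Finsupp.single 1 l)
      (MvPolynomial.aeval FF (MvPolynomial.monomial x r))
    = if ((((Finsupp.sumFinsuppEquivProdFinsupp x).1).erase 0).erase 1 = α
          ∧ (Finsupp.sumFinsuppEquivProdFinsupp x).1 0 ≤ k
          ∧ (Finsupp.sumFinsuppEquivProdFinsupp x).1 1 ≤ l)
      then r * ((x (Sum.inr 0) : ℂ) ^ (k - (Finsupp.sumFinsuppEquivProdFinsupp x).1 0)
          * (x (Sum.inr 1) : ℂ) ^ (l - (Finsupp.sumFinsuppEquivProdFinsupp x).1 1)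
          / (((k - (Finsupp.sumFinsuppEquivProdFinsupp x).1 0).factorial : ℂ)
            * ((l - (Finsupp.sumFinsuppEquivProdFinsupp x).1 1).factorial : ℂ)))
      else 0 := by
  conv_lhs => rw [d_decomp x]
  conv_lhs => rw [mu_decomp ((Finsupp.sumFinsuppEquivProdFinsupp x).1)]
  exact coeff_aeval_monomial α _ hα0 hα1 (erase_erase_0 _) (erase_erase_1 _) k l _ _ _ _ r

private lemma x_eq (x : (ℕ ⊕ Fin 2) →₀ ℕ) (α : ℕ →₀ ℕ)
    (h : (((Finsupp.sumFinsuppEquivProdFinsupp x).1).erase 0).erase 1 = α) :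
    x = Phi (α + Finsupp.single 0 ((Finsupp.sumFinsuppEquivProdFinsupp x).1 0)
        + Finsupp.single 1 ((Finsupp.sumFinsuppEquivProdFinsupp x).1 1))
        (x (Sum.inr 0)) (x (Sum.inr 1)) := by
  rw [← h, ← mu_decomp, ← d_decomp]

private lemma main_aux (P : MvPolynomial (ℕ ⊕ Fin 2) ℂ)
    (hP : MvPolynomial.aeval FF P = 0) : P = 0 := by
  set D := P.totalDegree with hD
  have hbound : ∀ d ∈ P.support, ∀ s, d s ≤ D := by
    intro d hd s
    have h1 : d s ≤ d.sum fun _ e => e := by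
      by_cases hs : s ∈ d.support
      · exact Finset.single_le_sum (f := fun i => d i) (fun i _ => Nat.zero_le _) hs
      · rw [Finsupp.notMem_support_iff.mp hs]
        exact Nat.zero_le _
    exact le_trans h1 (MvPolynomial.le_totalDegree hd)
  apply MvPolynomial.ext
  intro d
  rw [MvPolynomial.coeff_zero]
  by_cases hd : d ∈ P.support
  swap
  · exact MvPolynomial.notMem_support_iff.mp hd
  obtain ⟨μ, hμd⟩ : ∃ μ, (Finsupp.sumFinsuppEquivProdFinsupp d).1 = μ := ⟨_, rfl⟩
  obtain ⟨α, hαd⟩ : ∃ α, (μ.erase 0).erase 1 = α := ⟨_, rfl⟩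
  have hα0 : α 0 = 0 := by rw [← hαd]; exact erase_erase_0 μ
  have hα1 : α 1 = 0 := by rw [← hαd]; exact erase_erase_1 μ
  -- the grand relation
  have hSUM : ∀ k l : ℕ,
      ∑ a ∈ range (D + 1), ∑ k' ∈ range (D + 1),
        (if k' ≤ k then
          (∑ b ∈ range (D + 1), ∑ l' ∈ range (D + 1),
            (if l' ≤ l then
              P.coeff (Phi (α + Finsupp.single 0 k' + Finsupp.single 1 l') a b)
                * (b : ℂ) ^ (l - l') / ((l - l').factorial : ℂ)
            else 0))
          * (a : ℂ) ^ (k - k') / ((k - k').factorial : ℂ)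
        else 0) = 0 := by
    intro k l
    have hzero : MvPowerSeries.coeff (α + Finsupp.single 0 k + Finsupp.single 1 l)
        (MvPolynomial.aeval FF P) = 0 := by rw [hP, map_zero]
    have hexpand : MvPowerSeries.coeff (α + Finsupp.single 0 k + Finsupp.single 1 l)
        (MvPolynomial.aeval FF P)
        = ∑ x ∈ P.support, MvPowerSeries.coeff (α + Finsupp.single 0 k + Finsupp.single 1 l)
            (MvPolynomial.aeval FF (MvPolynomial.monomial x (P.coeff x))) := by
      conv_lhs => rw [P.as_sum]
      rw [map_sum, map_sum]
    -- quadruple index set and map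
    set QF : Finset ((ℕ × ℕ) × (ℕ × ℕ)) :=
      (range (D + 1) ×ˢ range (D + 1)) ×ˢ (range (D + 1) ×ˢ range (D + 1)) with hQF
    set Phi' : (ℕ × ℕ) × (ℕ × ℕ) → ((ℕ ⊕ Fin 2) →₀ ℕ) := fun q =>
      Phi (α + Finsupp.single 0 q.1.2 + Finsupp.single 1 q.2.2) q.1.1 q.2.1 with hPhi'
    set T : ((ℕ ⊕ Fin 2) →₀ ℕ) → ℂ := fun x =>
      MvPowerSeries.coeff (α + Finsupp.single 0 k + Finsupp.single 1 l)
        (MvPolynomial.aeval FF (MvPolynomial.monomial x (P.coeff x))) with hT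
    -- value of T on Phi' q
    have hval : ∀ a b k' l' : ℕ, T (Phi (α + Finsupp.single 0 k' + Finsupp.single 1 l') a b)
        = if k' ≤ k ∧ l' ≤ l then
            P.coeff (Phi (α + Finsupp.single 0 k' + Finsupp.single 1 l') a b)
              * ((a : ℂ) ^ (k - k') * (b : ℂ) ^ (l - l')
                / (((k - k').factorial : ℂ) * ((l - l').factorial : ℂ)))
          else 0 := by
      intro a b k' l'
      simp only [hT]
      rw [coeff_aeval_monomial α α hα0 hα1 hα0 hα1 k l k' l' a b]
      simp only [true_and, eq_self_iff_true, if_true]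
    -- step A : reshape nested sum into sum over QF of T ∘ Phi'
    have hreshape : ∑ a ∈ range (D + 1), ∑ k' ∈ range (D + 1),
        (if k' ≤ k then
          (∑ b ∈ range (D + 1), ∑ l' ∈ range (D + 1),
            (if l' ≤ l then
              P.coeff (Phi (α + Finsupp.single 0 k' + Finsupp.single 1 l') a b)
                * (b : ℂ) ^ (l - l') / ((l - l').factorial : ℂ)
            else 0))
          * (a : ℂ) ^ (k - k') / ((k - k').factorial : ℂ)
        else 0)
        = ∑ q ∈ QF, T (Phi' q) := by
      rw [hQF, Finset.sum_product, Finset.sum_product]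
      apply Finset.sum_congr rfl
      intro a _
      apply Finset.sum_congr rfl
      intro k' _
      rw [Finset.sum_product]
      by_cases hk' : k' ≤ k
      · rw [if_pos hk', div_eq_mul_inv, Finset.sum_mul, Finset.sum_mul]
        apply Finset.sum_congr rfl
        intro b _
        rw [Finset.sum_mul, Finset.sum_mul]
        apply Finset.sum_congr rfl
        intro l' _
        rw [hval a b k' l']
        by_cases hl' : l' ≤ l
        · rw [if_pos hl', if_pos ⟨hk', hl'⟩]
          field_simp
        · rw [if_neg hl', if_neg (fun h => hl' h.2)]
          simp
      · rw [if_neg hk']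
        symm
        apply Finset.sum_eq_zero
        intro b _
        apply Finset.sum_eq_zero
        intro l' _
        rw [hval a b k' l', if_neg (fun h => hk' h.1)]
    -- step B : injectivity
    have hinj : ∀ q1 ∈ QF, ∀ q2 ∈ QF, Phi' q1 = Phi' q2 → q1 = q2 := by
      intro q1 _ q2 _ h
      have e0 := DFunLike.congr_fun h (Sum.inr 0)
      have e1 := DFunLike.congr_fun h (Sum.inr 1)
      have e2 := DFunLike.congr_fun h (Sum.inl 0)
      have e3 := DFunLike.congr_fun h (Sum.inl 1)
      simp only [hPhi', Phi_inr0, Phi_inr1] at e0 e1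
      simp only [hPhi', Phi_inl] at e2 e3
      rw [mval0 α hα0, mval0 α hα0] at e2
      rw [mval1 α hα1, mval1 α hα1] at e3
      rcases q1 with ⟨⟨a1, k1⟩, ⟨b1, l1⟩⟩
      rcases q2 with ⟨⟨a2, k2⟩, ⟨b2, l2⟩⟩
      simp only at e0 e1 e2 e3
      simp [e0, e1, e2, e3]
    -- step C : sum over image equals sum over support
    have himg : ∑ q ∈ QF, T (Phi' q) = ∑ x ∈ QF.image Phi', T x :=
      (Finset.sum_image hinj).symm
    have hsub1 : ∑ x ∈ QF.image Phi', T x = ∑ x ∈ QF.image Phi' ∪ P.support, T x := by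
      apply Finset.sum_subset Finset.subset_union_left
      intro x hx hnx
      have hxs : x ∈ P.support := (Finset.mem_union.mp hx).resolve_left hnx
      simp only [hT]
      rw [T_formula α hα0 hα1 k l x (P.coeff x)]
      split
      · exfalso
        apply hnx
        next hco =>
        obtain ⟨hco1, hco2, hco3⟩ := hco
        apply Finset.mem_image.mpr
        refine ⟨((x (Sum.inr 0), (Finsupp.sumFinsuppEquivProdFinsupp x).1 0),
          (x (Sum.inr 1), (Finsupp.sumFinsuppEquivProdFinsupp x).1 1)), ?_, ?_⟩
        · rw [hQF]
          refine Finset.mem_product.mpr ⟨Finset.mem_product.mpr ⟨?_, ?_⟩,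
            Finset.mem_product.mpr ⟨?_, ?_⟩⟩
          · exact Finset.mem_range.mpr (Nat.lt_succ_of_le (hbound x hxs _))
          · rw [fst_apply]
            exact Finset.mem_range.mpr (Nat.lt_succ_of_le (hbound x hxs _))
          · exact Finset.mem_range.mpr (Nat.lt_succ_of_le (hbound x hxs _))
          · rw [fst_apply]
            exact Finset.mem_range.mpr (Nat.lt_succ_of_le (hbound x hxs _))
        · rw [hPhi']
          exact (x_eq x α hco1).symm
      · rfl
    have hsub2 : ∑ x ∈ P.support, T x = ∑ x ∈ QF.image Phi' ∪ P.support, T x := by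
      apply Finset.sum_subset Finset.subset_union_right
      intro x _ hnx
      simp only [hT]
      rw [MvPolynomial.notMem_support_iff.mp hnx]
      simp
    rw [hreshape, himg, hsub1, ← hsub2]
    rw [← hexpand] at *
    exact hzero
  -- apply the two-step coefficient extraction
  have step1 : ∀ l a k', a ≤ D → k' ≤ D →
      (∑ b ∈ range (D + 1), ∑ l' ∈ range (D + 1),
        (if l' ≤ l then
          P.coeff (Phi (α + Finsupp.single 0 k' + Finsupp.single 1 l') a b)
            * (b : ℂ) ^ (l - l') / ((l - l').factorial : ℂ)
        else 0)) = 0 := by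
    intro l a k' ha hk'
    exact coeff_lemma D
      (fun a k' => ∑ b ∈ range (D + 1), ∑ l' ∈ range (D + 1),
        (if l' ≤ l then
          P.coeff (Phi (α + Finsupp.single 0 k' + Finsupp.single 1 l') a b)
            * (b : ℂ) ^ (l - l') / ((l - l').factorial : ℂ)
        else 0))
      (fun k => hSUM k l) a k' ha hk'
  have step2 : ∀ a b k' l', a ≤ D → b ≤ D → k' ≤ D → l' ≤ D →
      P.coeff (Phi (α + Finsupp.single 0 k' + Finsupp.single 1 l') a b) = 0 := by
    intro a b k' l' ha hb hk' hl'
    exact coeff_lemma D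
      (fun b l' => P.coeff (Phi (α + Finsupp.single 0 k' + Finsupp.single 1 l') a b))
      (fun l => step1 l a k' ha hk') b l' hb hl'
  -- conclude for our d
  have hμ0 : μ 0 = d (Sum.inl 0) := by rw [← hμd]; exact fst_apply d 0
  have hμ1 : μ 1 = d (Sum.inl 1) := by rw [← hμd]; exact fst_apply d 1
  have hxeq : d = Phi (α + Finsupp.single 0 (μ 0) + Finsupp.single 1 (μ 1))
      (d (Sum.inr 0)) (d (Sum.inr 1)) := by
    have := x_eq d α (by rw [hμd, hαd])
    rwa [hμd] at this
  conv_lhs => rw [hxeq]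
  exact step2 (d (Sum.inr 0)) (d (Sum.inr 1)) (μ 0) (μ 1)
    (hbound d hd _) (hbound d hd _)
    (by rw [hμ0]; exact hbound d hd _) (by rw [hμ1]; exact hbound d hd _)

end Part5

end AuxiliaryLemmas

/-- In `ℂ[[X₀, X₁, X₂, …]]`, the family consisting of all the variables
`(X_n)_{n∈ℕ}` together with `E₀ = e^{X₀}` and `E₁ = e^{X₁}` is algebraically independent
over `ℂ`. -/
theorem variables_and_two_exponentials_algebraically_independent :
    AlgebraicIndependent ℂ
      (Sum.elim (fun n : ℕ => (MvPowerSeries.X n : MvPowerSeries ℕ ℂ))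
        (fun j : Fin 2 => expVar (j : ℕ))) := by
  rw [algebraicIndependent_iff]
  exact fun p hp => main_aux p hp
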